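/- For any partial order P on [n], the vertices of the order polytope O(P) are exactly the indicator vectors e_I of order filters I of P, and the vertices of the chain polytope C(P) are exactly the indicator vectors e_A of antichains A of P. -/

import Mathlib

open MeasureTheory

/-- The order polytope of a partial order `P` on `Fin n`. -/
def orderPolytope (n : ℕ) (P : PartialOrder (Fin n)) : Set (Fin n → ℝ) :=
  {x | (∀ i, 0 ≤ x i ∧ x i ≤ 1) ∧ ∀ j k, P.le j k → x j ≤ x k}

/-- The chain polytope of a partial order `P` on `Fin n`. -/
def chainPolytope (n : ℕ) (P : PartialOrder (Fin n)) : Set (Fin n → ℝ) :=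
  {x | (∀ i, 0 ≤ x i) ∧ ∀ C : Finset (Fin n), IsChain P.le ↑C → ∑ i ∈ C, x i ≤ 1}

/-- The number of linear extensions of a partial order `P` on `Fin n`. -/
noncomputable def numLinExtOrder (n : ℕ) (P : PartialOrder (Fin n)) : ℕ :=
  Nat.card {f : Fin n ≃ Fin n // ∀ j k, P.lt j k → f j < f k}

variable {n : ℕ} (P : PartialOrder (Fin n))

lemma Paux_lt_irrefl (a : Fin n) : ¬ P.lt a a := fun h =>
  ((P.lt_iff_le_not_ge a a).mp h).2 (P.le_refl a)

lemma Paux_lt_of_le_of_ne {a b : Fin n} (h : P.le a b) (hne : a ≠ b) : P.lt a b :=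
  (P.lt_iff_le_not_ge a b).mpr ⟨h, fun h' => hne (P.le_antisymm a b h h')⟩

lemma Paux_lt_le {a b : Fin n} (h : P.lt a b) : P.le a b :=
  ((P.lt_iff_le_not_ge a b).mp h).1

lemma Paux_lt_ne {a b : Fin n} (h : P.lt a b) : a ≠ b := fun e => Paux_lt_irrefl P a (e ▸ h)

lemma Paux_lt_of_lt_of_le {a b c : Fin n} (h : P.lt a b) (h' : P.le b c) : P.lt a c := by
  have h1 := (P.lt_iff_le_not_ge a b).mp h
  refine (P.lt_iff_le_not_ge a c).mpr ⟨P.le_trans _ _ _ h1.1 h', fun hca => h1.2 (P.le_trans _ _ _ h' hca)⟩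

lemma Paux_lt_of_le_of_lt {a b c : Fin n} (h : P.le a b) (h' : P.lt b c) : P.lt a c := by
  have h1 := (P.lt_iff_le_not_ge b c).mp h'
  refine (P.lt_iff_le_not_ge a c).mpr ⟨P.le_trans _ _ _ h h1.1, fun hca => h1.2 (P.le_trans _ _ _ hca h)⟩

lemma Paux_exists_min (F : Finset (Fin n)) (hF : F.Nonempty) :
    ∃ m ∈ F, ∀ u ∈ F, ¬ P.lt u m := by
  classical
  obtain ⟨m, hm, hmin⟩ :=
    F.exists_min_image (fun u => (Finset.univ.filter (fun v => P.lt v u)).card) hF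
  refine ⟨m, hm, fun u hu hlt => ?_⟩
  have hss : Finset.univ.filter (fun v => P.lt v u) ⊂ Finset.univ.filter (fun v => P.lt v m) := by
    refine Finset.ssubset_iff_of_subset ?_ |>.mpr ⟨u, ?_, ?_⟩
    · intro v hv
      simp only [Finset.mem_filter, Finset.mem_univ, true_and] at hv ⊢
      exact Paux_lt_of_lt_of_le P hv (Paux_lt_le P hlt)
    · simp only [Finset.mem_filter, Finset.mem_univ, true_and]; exact hlt
    · simp only [Finset.mem_filter, Finset.mem_univ, true_and]; exact Paux_lt_irrefl P u
  exact absurd (hmin u hu) (not_le.mpr (Finset.card_lt_card hss))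

lemma Paux_exists_max (F : Finset (Fin n)) (hF : F.Nonempty) :
    ∃ m ∈ F, ∀ u ∈ F, ¬ P.lt m u := by
  classical
  obtain ⟨m, hm, hmin⟩ :=
    F.exists_min_image (fun u => (Finset.univ.filter (fun v => P.lt u v)).card) hF
  refine ⟨m, hm, fun u hu hlt => ?_⟩
  have hss : Finset.univ.filter (fun v => P.lt u v) ⊂ Finset.univ.filter (fun v => P.lt m v) := by
    refine Finset.ssubset_iff_of_subset ?_ |>.mpr ⟨u, ?_, ?_⟩
    · intro v hv
      simp only [Finset.mem_filter, Finset.mem_univ, true_and] at hv ⊢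
      exact Paux_lt_of_le_of_lt P (Paux_lt_le P hlt) hv
    · simp only [Finset.mem_filter, Finset.mem_univ, true_and]; exact hlt
    · simp only [Finset.mem_filter, Finset.mem_univ, true_and]; exact Paux_lt_irrefl P u
  exact absurd (hmin u hu) (not_le.mpr (Finset.card_lt_card hss))

lemma aux_extreme_of_indicator {s : Set (Fin n → ℝ)}
    (hbdd : ∀ y ∈ s, ∀ i, 0 ≤ y i ∧ y i ≤ 1) {x : Fin n → ℝ} (hx : x ∈ s)
    (h01 : ∀ i, x i = 0 ∨ x i = 1) : x ∈ Set.extremePoints ℝ s := by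
  refine ⟨hx, fun y hy z hz hseg => ?_⟩
  obtain ⟨a, b, ha, hb, hab, habx⟩ := hseg
  have hxj : ∀ j, a * y j + b * z j = x j := fun j => by
    have := congrFun habx j; simpa using this
  have key : ∀ j, y j = x j ∧ z j = x j := by
    intro j
    have h1 := hbdd y hy j
    have h2 := hbdd z hz j
    have h3 := hxj j
    rcases h01 j with h | h <;> rw [h] at h3 ⊢ <;> constructor <;> nlinarith
  exact funext fun j => (key j).1



lemma Paux_chain_singleton (i : Fin n) : IsChain P.le ↑({i} : Finset (Fin n)) := by
  rw [Finset.coe_singleton]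
  exact Set.Subsingleton.isChain Set.subsingleton_singleton

lemma Paux_chain_pair {a b : Fin n} (h : P.le a b) :
    IsChain P.le ↑({a, b} : Finset (Fin n)) := by
  intro u hu v hv hne
  simp only [Finset.coe_insert, Finset.coe_singleton, Set.mem_insert_iff,
    Set.mem_singleton_iff] at hu hv
  rcases hu with rfl | rfl <;> rcases hv with rfl | rfl
  · exact absurd rfl hne
  · exact Or.inl h
  · exact Or.inr h
  · exact absurd rfl hne

lemma Paux_le_one {x : Fin n → ℝ} (hx : x ∈ chainPolytope n P) (i : Fin n) : x i ≤ 1 := by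
  have := hx.2 {i} (Paux_chain_singleton P i)
  simpa using this

lemma Paux_pair_sum {x : Fin n → ℝ} (hx : x ∈ chainPolytope n P) {a b : Fin n}
    (hab : P.le a b) (hne : a ≠ b) : x a + x b ≤ 1 := by
  have := hx.2 {a, b} (Paux_chain_pair P hab)
  rwa [Finset.sum_pair hne] at this

/-- In a tight chain, the minimal fractional element is a globally minimal fractional element. -/
lemma Paux_tight_min {x : Fin n → ℝ} (hx : x ∈ chainPolytope n P)
    (C : Finset (Fin n)) (hC : IsChain P.le ↑C) (hsum : ∑ i ∈ C, x i = 1)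
    (s : Fin n) (hs : s ∈ C) (hsf : x s ≠ 0 ∧ x s ≠ 1)
    (hmin : ∀ c ∈ C, (x c ≠ 0 ∧ x c ≠ 1) → P.le s c)
    (u : Fin n) (hu : x u ≠ 0 ∧ x u ≠ 1) (hus : P.lt u s) : False := by
  classical
  have hxs_pos : 0 < x s := lt_of_le_of_ne (hx.1 s) (Ne.symm hsf.1)
  have hxu_pos : 0 < x u := lt_of_le_of_ne (hx.1 u) (Ne.symm hu.1)
  -- elements of C strictly below s have value 0
  have hzero : ∀ c ∈ C, P.lt c s → x c = 0 := by
    intro c hc hcs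
    by_cases hcf : x c ≠ 0 ∧ x c ≠ 1
    · exact absurd (Paux_lt_of_le_of_lt P (hmin c hc hcf) hcs) (Paux_lt_irrefl P s)
    · rcases not_and_or.mp hcf with h | h
      · exact not_not.mp h
      · exfalso
        have h1 : x c = 1 := not_not.mp h
        have := Paux_pair_sum P hx (Paux_lt_le P hcs) (Paux_lt_ne P hcs)
        rw [h1] at this; linarith
  set C₁ := C.filter (fun c => P.le s c) with hC₁
  have hsumsplit := Finset.sum_filter_add_sum_filter_not C (fun c => P.le s c) x
  have hnotsum : ∑ i ∈ C.filter (fun c => ¬ P.le s c), x i = 0 := by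
    refine Finset.sum_eq_zero fun c hc => ?_
    rw [Finset.mem_filter] at hc
    have hne : c ≠ s := fun e => hc.2 (e ▸ P.le_refl s)
    rcases hC (Finset.mem_coe.mpr hc.1) (Finset.mem_coe.mpr hs) hne with h | h
    · exact hzero c hc.1 (Paux_lt_of_le_of_ne P h hne)
    · exact absurd h hc.2
  have hsum1 : ∑ i ∈ C₁, x i = 1 := by
    rw [hC₁]; rw [hnotsum, add_zero] at hsumsplit; rw [hsumsplit]; exact hsum
  have hunot : u ∉ C₁ := by
    intro h
    rw [hC₁, Finset.mem_filter] at h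
    exact Paux_lt_irrefl P u (Paux_lt_of_lt_of_le P hus h.2)
  have hchain' : IsChain P.le ↑(insert u C₁) := by
    intro a ha b hb hne
    simp only [Finset.coe_insert, Set.mem_insert_iff, Finset.mem_coe] at ha hb
    have hmem : ∀ c ∈ C₁, P.le u c := fun c hc =>
      Paux_lt_le P (Paux_lt_of_lt_of_le P hus (Finset.mem_filter.mp hc).2)
    rcases ha with rfl | ha <;> rcases hb with rfl | hb
    · exact absurd rfl hne
    · exact Or.inl (hmem b hb)
    · exact Or.inr (hmem a ha)
    · exact hC (Finset.mem_coe.mpr (Finset.mem_filter.mp ha).1)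
        (Finset.mem_coe.mpr (Finset.mem_filter.mp hb).1) hne
  have := hx.2 (insert u C₁) hchain'
  rw [Finset.sum_insert hunot, hsum1] at this
  linarith

/-- In a tight chain, the maximal fractional element is a globally maximal fractional element. -/
lemma Paux_tight_max {x : Fin n → ℝ} (hx : x ∈ chainPolytope n P)
    (C : Finset (Fin n)) (hC : IsChain P.le ↑C) (hsum : ∑ i ∈ C, x i = 1)
    (s : Fin n) (hs : s ∈ C) (hsf : x s ≠ 0 ∧ x s ≠ 1)
    (hmax : ∀ c ∈ C, (x c ≠ 0 ∧ x c ≠ 1) → P.le c s)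
    (u : Fin n) (hu : x u ≠ 0 ∧ x u ≠ 1) (hus : P.lt s u) : False := by
  classical
  have hxs_pos : 0 < x s := lt_of_le_of_ne (hx.1 s) (Ne.symm hsf.1)
  have hxu_pos : 0 < x u := lt_of_le_of_ne (hx.1 u) (Ne.symm hu.1)
  have hzero : ∀ c ∈ C, P.lt s c → x c = 0 := by
    intro c hc hcs
    by_cases hcf : x c ≠ 0 ∧ x c ≠ 1
    · exact absurd (Paux_lt_of_lt_of_le P hcs (hmax c hc hcf)) (Paux_lt_irrefl P s)
    · rcases not_and_or.mp hcf with h | h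
      · exact not_not.mp h
      · exfalso
        have h1 : x c = 1 := not_not.mp h
        have := Paux_pair_sum P hx (Paux_lt_le P hcs) (Paux_lt_ne P hcs)
        rw [h1] at this; linarith
  set C₁ := C.filter (fun c => P.le c s) with hC₁
  have hsumsplit := Finset.sum_filter_add_sum_filter_not C (fun c => P.le c s) x
  have hnotsum : ∑ i ∈ C.filter (fun c => ¬ P.le c s), x i = 0 := by
    refine Finset.sum_eq_zero fun c hc => ?_
    rw [Finset.mem_filter] at hc
    have hne : c ≠ s := fun e => hc.2 (e ▸ P.le_refl s)
    rcases hC (Finset.mem_coe.mpr hc.1) (Finset.mem_coe.mpr hs) hne with h | h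
    · exact absurd h hc.2
    · exact hzero c hc.1 (Paux_lt_of_le_of_ne P h (Ne.symm hne))
  have hsum1 : ∑ i ∈ C₁, x i = 1 := by
    rw [hC₁]; rw [hnotsum, add_zero] at hsumsplit; rw [hsumsplit]; exact hsum
  have hunot : u ∉ C₁ := by
    intro h
    rw [hC₁, Finset.mem_filter] at h
    exact Paux_lt_irrefl P u (Paux_lt_of_le_of_lt P h.2 hus)
  have hchain' : IsChain P.le ↑(insert u C₁) := by
    intro a ha b hb hne
    simp only [Finset.coe_insert, Set.mem_insert_iff, Finset.mem_coe] at ha hb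
    have hmem : ∀ c ∈ C₁, P.le c u := fun c hc =>
      Paux_lt_le P (Paux_lt_of_le_of_lt P (Finset.mem_filter.mp hc).2 hus)
    rcases ha with rfl | ha <;> rcases hb with rfl | hb
    · exact absurd rfl hne
    · exact Or.inr (hmem b hb)
    · exact Or.inl (hmem a ha)
    · exact hC (Finset.mem_coe.mpr (Finset.mem_filter.mp ha).1)
        (Finset.mem_coe.mpr (Finset.mem_filter.mp hb).1) hne
  have := hx.2 (insert u C₁) hchain'
  rw [Finset.sum_insert hunot, hsum1] at this
  linarith

/-- A tight chain containing a fractional element contains a second fractional element. -/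
lemma Paux_tight_two {x : Fin n → ℝ} (hx : x ∈ chainPolytope n P)
    (C : Finset (Fin n)) (hsum : ∑ i ∈ C, x i = 1)
    (s : Fin n) (hs : s ∈ C) (hsf : x s ≠ 0 ∧ x s ≠ 1) :
    ∃ t ∈ C, (x t ≠ 0 ∧ x t ≠ 1) ∧ t ≠ s := by
  classical
  by_contra hcon
  push_neg at hcon
  have hint : ∀ t ∈ C.erase s, x t = 0 ∨ x t = 1 := by
    intro t ht
    rw [Finset.mem_erase] at ht
    by_contra h
    push_neg at h
    exact ht.1 (hcon t ht.2 h)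
  have hm : ∃ m : ℕ, ∑ i ∈ C.erase s, x i = (m : ℝ) := by
    refine Finset.sum_induction _ (fun r => ∃ m : ℕ, r = (m : ℝ)) ?_ ⟨0, by simp⟩ ?_
    · rintro a b ⟨ma, rfl⟩ ⟨mb, rfl⟩
      exact ⟨ma + mb, by push_cast; ring⟩
    · intro t ht
      rcases hint t ht with h | h
      · exact ⟨0, by simp [h]⟩
      · exact ⟨1, by simp [h]⟩
  obtain ⟨m, hmeq⟩ := hm
  have htot : x s + (m : ℝ) = 1 := by
    rw [← hmeq, Finset.add_sum_erase C x hs]; exact hsum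
  have hxs_pos : 0 < x s := lt_of_le_of_ne (hx.1 s) (Ne.symm hsf.1)
  have hxs_lt : x s < 1 := lt_of_le_of_ne (Paux_le_one P hx s) hsf.2
  rcases Nat.eq_zero_or_pos m with h | h
  · rw [h] at htot; push_cast at htot; exact hsf.2 (by linarith)
  · have : (1 : ℝ) ≤ (m : ℝ) := by exact_mod_cast h
    linarith

lemma Paux_perturb {x : Fin n → ℝ} (hx : x ∈ chainPolytope n P) (d : Fin n → ℝ)
    (j₀ : Fin n) (hj₀ : d j₀ ≠ 0)
    (hdsupp : ∀ j, d j ≠ 0 → x j ≠ 0 ∧ x j ≠ 1)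
    (hdbd : ∀ j, |d j| ≤ 1)
    (hdtight : ∀ C : Finset (Fin n), IsChain P.le ↑C → ∑ i ∈ C, x i = 1 →
      ∑ i ∈ C, d i = 0) :
    x ∉ Set.extremePoints ℝ (chainPolytope n P) := by
  classical
  intro hext
  have hn : (0 : ℝ) < n := by exact_mod_cast j₀.pos
  set g : Finset (Fin n) → ℝ := fun F =>
    if IsChain P.le ↑F ∧ ∑ i ∈ F, x i < 1 then (1 - ∑ i ∈ F, x i) / n else 1 with hg
  set h : Fin n → ℝ := fun j =>
    if x j ≠ 0 ∧ x j ≠ 1 then min (x j) (1 - x j) else 1 with hh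
  have hgpos : ∀ F, 0 < g F := by
    intro F
    simp only [hg]
    split_ifs with hF
    · exact div_pos (by linarith [hF.2]) hn
    · norm_num
  have hhpos : ∀ j, 0 < h j := by
    intro j
    simp only [hh]
    split_ifs with hj
    · exact lt_min (lt_of_le_of_ne (hx.1 j) (Ne.symm hj.1))
        (by linarith [lt_of_le_of_ne (Paux_le_one P hx j) hj.2])
    · norm_num
  set ε : ℝ := min ((Finset.univ : Finset (Finset (Fin n))).inf' ⟨∅, Finset.mem_univ _⟩ g)
      ((Finset.univ : Finset (Fin n)).inf' ⟨j₀, Finset.mem_univ _⟩ h) with hε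
  have hεpos : 0 < ε := by
    rw [hε]
    refine lt_min ?_ ?_
    · refine (Finset.lt_inf'_iff _).mpr ?_; exact fun F _ => hgpos F
    · refine (Finset.lt_inf'_iff _).mpr ?_; exact fun j _ => hhpos j
  have hεg : ∀ F, ε ≤ g F := fun F =>
    le_trans (min_le_left _ _) (Finset.inf'_le _ (Finset.mem_univ F))
  have hεh : ∀ j, ε ≤ h j := fun j =>
    le_trans (min_le_right _ _) (Finset.inf'_le _ (Finset.mem_univ j))
  have hmem : ∀ σ : ℝ, σ = 1 ∨ σ = -1 →
      (fun j => x j + ε * (σ * d j)) ∈ chainPolytope n P := by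
    intro σ hσ
    have hσd : ∀ j, -1 ≤ σ * d j ∧ σ * d j ≤ 1 := by
      intro j
      have := abs_le.mp (hdbd j)
      rcases hσ with rfl | rfl <;> constructor <;> nlinarith
    constructor
    · intro j
      show 0 ≤ x j + ε * (σ * d j)
      by_cases hdj : d j = 0
      · simp [hdj, hx.1 j]
      · have hj := hdsupp j hdj
        have h1 : ε ≤ min (x j) (1 - x j) := by
          have := hεh j; rw [hh] at this; simpa [hj] using this
        have h2 : ε ≤ x j := le_trans h1 (min_le_left _ _)
        have := (hσd j).1
        nlinarith
    · intro C hC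
      have hsplit : ∑ i ∈ C, (x i + ε * (σ * d i)) =
          (∑ i ∈ C, x i) + ε * σ * (∑ i ∈ C, d i) := by
        rw [Finset.sum_add_distrib, Finset.mul_sum]
        congr 1
        refine Finset.sum_congr rfl fun i _ => by ring
      rw [hsplit]
      rcases eq_or_lt_of_le (hx.2 C hC) with htight | hlt
      · rw [hdtight C hC htight, htight]; simp
      · have hcard : (C.card : ℝ) ≤ n := by
          exact_mod_cast le_trans (Finset.card_le_univ C) (le_of_eq (Finset.card_fin n))
        have habs : |∑ i ∈ C, d i| ≤ (C.card : ℝ) := by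
          calc |∑ i ∈ C, d i| ≤ ∑ i ∈ C, |d i| := Finset.abs_sum_le_sum_abs _ _
            _ ≤ ∑ _i ∈ C, (1 : ℝ) := Finset.sum_le_sum fun i _ => hdbd i
            _ = C.card := by simp
        have hsd : σ * (∑ i ∈ C, d i) ≤ (n : ℝ) := by
          have := abs_le.mp habs
          rcases hσ with rfl | rfl <;> nlinarith
        have hεgC : ε ≤ (1 - ∑ i ∈ C, x i) / n := by
          have := hεg C; rw [hg] at this; simpa [hC, hlt] using this
        have h1 : ε * (σ * (∑ i ∈ C, d i)) ≤ ε * n :=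
          mul_le_mul_of_nonneg_left hsd (le_of_lt hεpos)
        have h2 : ε * n ≤ 1 - ∑ i ∈ C, x i := by
          rw [le_div_iff₀ hn] at hεgC
          exact hεgC
        have h3 : ε * σ * (∑ i ∈ C, d i) = ε * (σ * (∑ i ∈ C, d i)) := by ring
        linarith
  have hy := hmem 1 (Or.inl rfl)
  have hz := hmem (-1) (Or.inr rfl)
  have hseg : x ∈ openSegment ℝ (fun j => x j + ε * (1 * d j))
      (fun j => x j + ε * ((-1) * d j)) := by
    refine ⟨1/2, 1/2, by norm_num, by norm_num, by norm_num, ?_⟩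
    funext j
    simp only [Pi.add_apply, Pi.smul_apply, smul_eq_mul]
    ring
  have hyx := (hext.2 hy hz hseg)
  have := congrFun hyx j₀
  simp only [one_mul] at this
  have : ε * d j₀ = 0 := by linarith
  exact hj₀ (by
    rcases mul_eq_zero.mp this with h' | h'
    · exact absurd h' (ne_of_gt hεpos)
    · exact h')

lemma Paux_chain_01 {x : Fin n → ℝ} (hext : x ∈ Set.extremePoints ℝ (chainPolytope n P))
    (j : Fin n) : x j = 0 ∨ x j = 1 := by
  classical
  have hx : x ∈ chainPolytope n P := hext.1
  by_contra hj
  push_neg at hj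
  by_cases hA : ∃ i, (x i ≠ 0 ∧ x i ≠ 1) ∧
      ∀ C : Finset (Fin n), IsChain P.le ↑C → ∑ k ∈ C, x k = 1 → i ∉ C
  · -- some fractional coordinate lies on no tight chain
    obtain ⟨i, hif, hino⟩ := hA
    refine Paux_perturb P hx (fun k => if k = i then 1 else 0) i (by simp) ?_ ?_ ?_ hext
    · intro k hk
      by_cases h : k = i
      · exact h ▸ hif
      · simp [h] at hk
    · intro k; by_cases h : k = i <;> simp [h]
    · intro C hC hsum
      rw [Finset.sum_ite_eq' C i (fun _ => (1:ℝ))]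
      exact if_neg (hino C hC hsum)
  · -- every fractional coordinate lies on some tight chain
    push_neg at hA
    set frac : Fin n → Prop := fun k => x k ≠ 0 ∧ x k ≠ 1 with hfrac
    set d : Fin n → ℝ := fun k =>
      if frac k ∧ (∀ u, frac u → ¬ P.lt u k) ∧ (∃ u, frac u ∧ P.lt k u) then 1
      else if frac k ∧ (∀ u, frac u → ¬ P.lt k u) ∧ (∃ u, frac u ∧ P.lt u k) then -1
      else 0 with hd
    have dval : ∀ k, d k =
        if frac k ∧ (∀ u, frac u → ¬ P.lt u k) ∧ (∃ u, frac u ∧ P.lt k u) then 1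
        else if frac k ∧ (∀ u, frac u → ¬ P.lt k u) ∧ (∃ u, frac u ∧ P.lt u k) then -1
        else 0 := fun k => by rw [hd]
    -- find a global P-minimal fractional element; d is 1 there
    obtain ⟨m, hmF, hmmin⟩ := Paux_exists_min P (Finset.univ.filter frac)
      ⟨j, Finset.mem_filter.mpr ⟨Finset.mem_univ j, hj⟩⟩
    have hmfrac : frac m := (Finset.mem_filter.mp hmF).2
    have hmmin' : ∀ u, frac u → ¬ P.lt u m := fun u hu =>
      hmmin u (Finset.mem_filter.mpr ⟨Finset.mem_univ u, hu⟩)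
    have hmabove : ∃ u, frac u ∧ P.lt m u := by
      obtain ⟨C, hC, hsum, hmC⟩ := hA m hmfrac
      obtain ⟨t, htC, htf, htm⟩ := Paux_tight_two P hx C hsum m hmC hmfrac
      rcases hC (Finset.mem_coe.mpr hmC) (Finset.mem_coe.mpr htC) (Ne.symm htm) with h | h
      · exact ⟨t, htf, Paux_lt_of_le_of_ne P h (Ne.symm htm)⟩
      · exact absurd (Paux_lt_of_le_of_ne P h htm) (hmmin' t htf)
    have hdm : d m = 1 := by
      rw [dval m]; exact if_pos ⟨hmfrac, hmmin', hmabove⟩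
    refine Paux_perturb P hx d m (by rw [hdm]; norm_num) ?_ ?_ ?_ hext
    · intro k hk
      rw [dval k] at hk
      split_ifs at hk with h1 h2
      · exact h1.1
      · exact h2.1
      · exact absurd rfl hk
    · intro k
      rw [dval k]
      split_ifs <;> norm_num
    · -- tight chains sum to zero
      intro C hC hsum
      by_cases hCf : ∃ c ∈ C, frac c
      · obtain ⟨c₀, hc₀C, hc₀f⟩ := hCf
        have hCfne : (C.filter frac).Nonempty :=
          ⟨c₀, Finset.mem_filter.mpr ⟨hc₀C, hc₀f⟩⟩
        obtain ⟨smin, hsminF, hsminmin⟩ := Paux_exists_min P (C.filter frac) hCfne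
        obtain ⟨smax, hsmaxF, hsmaxmax⟩ := Paux_exists_max P (C.filter frac) hCfne
        have hsminC : smin ∈ C := (Finset.mem_filter.mp hsminF).1
        have hsminf : frac smin := (Finset.mem_filter.mp hsminF).2
        have hsmaxC : smax ∈ C := (Finset.mem_filter.mp hsmaxF).1
        have hsmaxf : frac smax := (Finset.mem_filter.mp hsmaxF).2
        -- smin is the minimum of the fractional elements of C
        have hminle : ∀ c ∈ C, frac c → P.le smin c := by
          intro c hc hcf
          by_cases he : c = smin
          · exact he ▸ P.le_refl c
          · rcases hC (Finset.mem_coe.mpr hsminC) (Finset.mem_coe.mpr hc) (Ne.symm he) with h | h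
            · exact h
            · exact absurd (Paux_lt_of_le_of_ne P h he)
                (hsminmin c (Finset.mem_filter.mpr ⟨hc, hcf⟩))
        have hmaxle : ∀ c ∈ C, frac c → P.le c smax := by
          intro c hc hcf
          by_cases he : c = smax
          · exact he ▸ P.le_refl c
          · rcases hC (Finset.mem_coe.mpr hc) (Finset.mem_coe.mpr hsmaxC) he with h | h
            · exact h
            · exact absurd (Paux_lt_of_le_of_ne P h (Ne.symm he))
                (hsmaxmax c (Finset.mem_filter.mpr ⟨hc, hcf⟩))
        have hne : smin ≠ smax := by
          obtain ⟨t, htC, htf, htm⟩ := Paux_tight_two P hx C hsum smin hsminC hsminf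
          intro he
          apply htm
          have h1 : P.le t smax := hmaxle t htC htf
          rw [← he] at h1
          exact P.le_antisymm t smin h1 (hminle t htC htf)
        have hltmm : P.lt smin smax :=
          Paux_lt_of_le_of_ne P (hminle smax hsmaxC hsmaxf) hne
        -- global minimality / maximality via the tight chain lemmas
        have hgmin : ∀ u, frac u → ¬ P.lt u smin := fun u hu hlt =>
          Paux_tight_min P hx C hC hsum smin hsminC hsminf hminle u hu hlt
        have hgmax : ∀ u, frac u → ¬ P.lt smax u := fun u hu hlt =>
          Paux_tight_max P hx C hC hsum smax hsmaxC hsmaxf hmaxle u hu hlt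
        have hterm : ∀ k ∈ C, d k =
            (if k = smin then (1:ℝ) else 0) + (if k = smax then (-1:ℝ) else 0) := by
          intro k hk
          by_cases hkf : frac k
          · by_cases h1 : k = smin
            · subst h1
              rw [if_pos rfl, if_neg hne, dval k]
              rw [if_pos ⟨hkf, hgmin, smax, hsmaxf, hltmm⟩]; ring
            · by_cases h2 : k = smax
              · subst h2
                rw [if_neg h1, if_pos rfl, dval k]
                rw [if_neg (fun hcon => hcon.2.1 smin hsminf hltmm),
                  if_pos ⟨hkf, hgmax, smin, hsminf, hltmm⟩]; ring
              · rw [if_neg h1, if_neg h2, dval k]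
                have hlt1 : P.lt smin k :=
                  Paux_lt_of_le_of_ne P (hminle k hk hkf) (Ne.symm h1)
                have hlt2 : P.lt k smax :=
                  Paux_lt_of_le_of_ne P (hmaxle k hk hkf) h2
                rw [if_neg (fun hcon => hcon.2.1 smin hsminf hlt1),
                  if_neg (fun hcon => hcon.2.1 smax hsmaxf hlt2)]; ring
          · have hd0 : d k = 0 := by
              rw [dval k]
              split_ifs with h1 h2
              · exact absurd h1.1 hkf
              · exact absurd h2.1 hkf
              · rfl
            rw [hd0, if_neg (fun h => hkf (by rw [h]; exact hsminf)), if_neg (fun h => hkf (by rw [h]; exact hsmaxf))]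
            ring
        rw [Finset.sum_congr rfl hterm, Finset.sum_add_distrib,
          Finset.sum_ite_eq' C smin (fun _ => (1:ℝ)),
          Finset.sum_ite_eq' C smax (fun _ => (-1:ℝ)),
          if_pos hsminC, if_pos hsmaxC]
        ring
      · push_neg at hCf
        refine Finset.sum_eq_zero fun k hk => ?_
        rw [dval k]
        split_ifs with h1 h2
        · exact absurd h1.1 (hCf k hk)
        · exact absurd h2.1 (hCf k hk)
        · rfl


lemma Paux_order_01 {x : Fin n → ℝ} (hext : x ∈ Set.extremePoints ℝ (orderPolytope n P))
    (i : Fin n) : x i = 0 ∨ x i = 1 := by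
  classical
  have hx : x ∈ orderPolytope n P := hext.1
  by_contra hi
  push_neg at hi
  set t : ℝ := x i with ht
  have ht0 : 0 < t := lt_of_le_of_ne (hx.1 i).1 (Ne.symm hi.1)
  have ht1 : t < 1 := lt_of_le_of_ne (hx.1 i).2 hi.2
  set h : Fin n → ℝ := fun j => if x j = t then min t (1 - t) else |x j - t| with hh
  have hhpos : ∀ j, 0 < h j := by
    intro j
    simp only [hh]
    split_ifs with hj
    · exact lt_min ht0 (by linarith)
    · exact abs_pos.mpr (sub_ne_zero.mpr hj)
  set ε : ℝ := (Finset.univ : Finset (Fin n)).inf' ⟨i, Finset.mem_univ i⟩ h with hε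
  have hεpos : 0 < ε := by
    rw [hε]; refine (Finset.lt_inf'_iff _).mpr ?_
    exact fun j _ => hhpos j
  have hεh : ∀ j, ε ≤ h j := fun j => Finset.inf'_le _ (Finset.mem_univ j)
  have hεt : ε ≤ min t (1 - t) := by
    have := hεh i
    simpa only [hh, ht, if_pos rfl] using this
  have hεgap : ∀ j, x j ≠ t → ε ≤ |x j - t| := by
    intro j hj
    have := hεh j
    simpa only [hh, if_neg hj] using this
  set d : Fin n → ℝ := fun j => if x j = t then 1 else 0 with hd
  have dval : ∀ j, d j = if x j = t then (1:ℝ) else 0 := fun j => by rw [hd]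
  have hmem : ∀ σ : ℝ, σ = 1 ∨ σ = -1 →
      (fun j => x j + ε * (σ * d j)) ∈ orderPolytope n P := by
    intro σ hσ
    have hσ1 : |σ| = 1 := by rcases hσ with rfl | rfl <;> norm_num
    constructor
    · intro j
      show 0 ≤ x j + ε * (σ * d j) ∧ x j + ε * (σ * d j) ≤ 1
      rw [dval j]
      split_ifs with hj
      · have h1 : ε ≤ t := le_trans hεt (min_le_left _ _)
        have h2 : ε ≤ 1 - t := le_trans hεt (min_le_right _ _)
        rw [hj]
        rcases hσ with rfl | rfl <;> constructor <;> nlinarith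
      · simpa using hx.1 j
    · intro j k hjk
      show x j + ε * (σ * d j) ≤ x k + ε * (σ * d k)
      rw [dval j, dval k]
      have hle := hx.2 j k hjk
      by_cases hj : x j = t <;> by_cases hk : x k = t
      · rw [if_pos hj, if_pos hk]; linarith
      · rw [if_pos hj, if_neg hk]
        have hlt : t < x k := lt_of_le_of_ne (hj ▸ hle) (Ne.symm hk)
        have := hεgap k hk
        rw [abs_of_pos (by linarith : (0:ℝ) < x k - t)] at this
        rcases hσ with rfl | rfl <;> nlinarith
      · rw [if_neg hj, if_pos hk]
        have hlt : x j < t := lt_of_le_of_ne (hk ▸ hle) hj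
        have := hεgap j hj
        rw [abs_of_neg (by linarith : x j - t < 0)] at this
        rcases hσ with rfl | rfl <;> nlinarith
      · rw [if_neg hj, if_neg hk]; linarith
  have hy := hmem 1 (Or.inl rfl)
  have hz := hmem (-1) (Or.inr rfl)
  have hseg : x ∈ openSegment ℝ (fun j => x j + ε * (1 * d j))
      (fun j => x j + ε * ((-1) * d j)) := by
    refine ⟨1/2, 1/2, by norm_num, by norm_num, by norm_num, ?_⟩
    funext j
    simp only [Pi.add_apply, Pi.smul_apply, smul_eq_mul]
    ring
  have hyx := (hext.2 hy hz hseg)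
  have h1 := congrFun hyx i
  have h2 : d i = 1 := by rw [dval i, if_pos ht.symm]
  simp only [h2, one_mul, mul_one] at h1
  linarith

lemma Paux_filter_mem (I : Set (Fin n)) (hI : ∀ j k, P.le j k → j ∈ I → k ∈ I) :
    I.indicator (fun _ => (1 : ℝ)) ∈ orderPolytope n P := by
  classical
  constructor
  · intro j
    rw [Set.indicator_apply]
    split_ifs <;> norm_num
  · intro j k hjk
    rw [Set.indicator_apply, Set.indicator_apply]
    by_cases hj : j ∈ I
    · rw [if_pos hj, if_pos (hI j k hjk hj)]
    · rw [if_neg hj]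
      split_ifs <;> norm_num

lemma Paux_antichain_mem (A : Set (Fin n)) (hA : IsAntichain P.le A) :
    A.indicator (fun _ => (1 : ℝ)) ∈ chainPolytope n P := by
  classical
  constructor
  · intro j
    rw [Set.indicator_apply]
    split_ifs <;> norm_num
  · intro C hC
    have : ∑ k ∈ C, A.indicator (fun _ => (1:ℝ)) k =
        ((C.filter (fun k => k ∈ A)).card : ℝ) := by
      rw [Finset.card_filter]
      push_cast
      refine Finset.sum_congr rfl fun k _ => ?_
      rw [Set.indicator_apply]
    rw [this]
    have hcard : (C.filter (fun k => k ∈ A)).card ≤ 1 := by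
      rw [Finset.card_le_one]
      intro a ha b hb
      rw [Finset.mem_filter] at ha hb
      by_contra hne
      rcases hC (Finset.mem_coe.mpr ha.1) (Finset.mem_coe.mpr hb.1) hne with h | h
      · exact hA ha.2 hb.2 hne h
      · exact hA hb.2 ha.2 (Ne.symm hne) h
    exact_mod_cast hcard

lemma Paux_indicator_01 (A : Set (Fin n)) (j : Fin n) :
    A.indicator (fun _ => (1:ℝ)) j = 0 ∨ A.indicator (fun _ => (1:ℝ)) j = 1 := by
  classical
  rw [Set.indicator_apply]
  split_ifs <;> simp

theorem stmt_3' (P : PartialOrder (Fin n)) :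
    (Set.extremePoints ℝ (orderPolytope n P) =
      {x | ∃ I : Set (Fin n), (∀ j k, P.le j k → j ∈ I → k ∈ I) ∧
        x = I.indicator (fun _ => (1 : ℝ))}) ∧
    (Set.extremePoints ℝ (chainPolytope n P) =
      {x | ∃ A : Set (Fin n), IsAntichain P.le A ∧
        x = A.indicator (fun _ => (1 : ℝ))}) := by
  classical
  constructor
  · ext x
    constructor
    · intro hext
      have hx : x ∈ orderPolytope n P := hext.1
      have h01 := Paux_order_01 P hext
      refine ⟨{j | x j = 1}, ?_, ?_⟩
      · intro j k hjk hj
        have := hx.2 j k hjk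
        rw [Set.mem_setOf_eq] at hj ⊢
        rcases h01 k with h | h
        · rw [hj] at this; rw [h] at this; linarith
        · exact h
      · funext j
        rcases h01 j with h | h <;>
          simp [Set.indicator_apply, Set.mem_setOf_eq, h]
    · rintro ⟨I, hI, rfl⟩
      refine aux_extreme_of_indicator (fun y hy k => hy.1 k) (Paux_filter_mem P I hI)
        (Paux_indicator_01 I)
  · ext x
    constructor
    · intro hext
      have hx : x ∈ chainPolytope n P := hext.1
      have h01 := Paux_chain_01 P hext
      refine ⟨{j | x j = 1}, ?_, ?_⟩
      · intro a ha b hb hne hab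
        rw [Set.mem_setOf_eq] at ha hb
        have := Paux_pair_sum P hx hab hne
        rw [ha, hb] at this; linarith
      · funext j
        rcases h01 j with h | h <;>
          simp [Set.indicator_apply, Set.mem_setOf_eq, h]
    · rintro ⟨A, hA, rfl⟩
      refine aux_extreme_of_indicator
        (fun y hy k => ⟨hy.1 k, Paux_le_one P hy k⟩) (Paux_antichain_mem P A hA)
        (Paux_indicator_01 A)


theorem stmt_3 (n : ℕ) (P : PartialOrder (Fin n)) :
    (Set.extremePoints ℝ (orderPolytope n P) =
      {x | ∃ I : Set (Fin n), (∀ j k, P.le j k → j ∈ I → k ∈ I) ∧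
        x = I.indicator (fun _ => (1 : ℝ))}) ∧
    (Set.extremePoints ℝ (chainPolytope n P) =
      {x | ∃ A : Set (Fin n), IsAntichain P.le A ∧
        x = A.indicator (fun _ => (1 : ℝ))}) :=
  stmt_3' P
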